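/- For every nonempty computably enumerable set B that is disjoint from some infinite computable set, there exists a computable permutation π of ℕ such that π⁻¹(B) is self-constructing (equivalently, B = π(A) for some self-constructing set A). -/

import Mathlib

/-- The e-th partial computable function in a standard numbering. -/
def phi (e : ℕ) : ℕ →. ℕ :=
  Nat.Partrec.Code.eval (Denumerable.ofNat Nat.Partrec.Code e)

/-- W e is the domain of the e-th partial computable function. -/
def W (e : ℕ) : Set ℕ := (phi e).Dom


/-- A set is computably enumerable iff it is W e for some e. -/
def CE (A : Set ℕ) : Prop := ∃ e, W e = A

/-- A nonempty c.e. set A is self-constructing if W e = A for every e ∈ A. -/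
def SelfConstructing (A : Set ℕ) : Prop :=
  A.Nonempty ∧ CE A ∧ ∀ e ∈ A, W e = A


open Computable in
lemma count_computable {p : ℕ → Prop} [DecidablePred p]
    (hp : Computable fun n => decide (p n)) : Computable (Nat.count p) := by
  have : Computable fun n => Nat.rec (motive := fun _ => ℕ) 0
      (fun y IH => IH + (bif decide (p y) then 1 else 0)) n :=
    Computable.nat_rec Computable.id (const 0)
      (Primrec.nat_add.to_comp.comp (snd.comp snd)
        (cond (hp.comp (fst.comp snd)) (const 1) (const 0))).to₂
  refine this.of_eq fun n => ?_
  induction n with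
  | zero => simp
  | succ n ih => rw [Nat.count_succ]; by_cases h : p n <;> simp [h, ih]

open Computable in
lemma nth_computable {p : ℕ → Prop} [DecidablePred p]
    (hp : Computable fun n => decide (p n)) (hinf : (setOf p).Infinite) :
    Computable (Nat.nth p) := by
  have hcnt := count_computable hp
  have hpart : Partrec fun k => Nat.rfindOpt fun x =>
      bif decide (p x) then (bif Nat.count p x == k then some x else none) else none := by
    apply Partrec.rfindOpt
    exact (cond (hp.comp snd)
      (cond (Primrec.beq.to_comp.comp (hcnt.comp snd) fst)
        (Computable.option_some.comp snd) (const none))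
      (const none)).to₂
  refine hpart.of_eq_tot fun k => ?_
  have h1 : p (Nat.nth p k) := Nat.nth_mem_of_infinite hinf k
  have h2 : Nat.count p (Nat.nth p k) = k := Nat.count_nth_of_infinite hinf k
  have hdom : (Nat.rfindOpt fun x =>
      bif decide (p x) then (bif Nat.count p x == k then some x else none) else none).Dom := by
    rw [Nat.rfindOpt_dom]
    exact ⟨Nat.nth p k, Nat.nth p k, by simp [h1, h2]⟩
  refine ⟨hdom, ?_⟩
  have := Nat.rfindOpt_spec (Part.get_mem hdom)
  obtain ⟨n, hn⟩ := this
  -- hn : get ∈ (bif ... )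
  rcases hb : decide (p n) with _ | _ <;> rw [hb] at hn
  · simp at hn
  · rcases hc : (Nat.count p n == k) with _ | _ <;> rw [hc] at hn
    · simp at hn
    · simp at hn hb hc
      subst hn
      have h3 := Nat.nth_count hb
      rw [hc] at h3
      exact h3.symm


open Nat.Partrec Code in
lemma exists_code_h (B : Set ℕ) (hB : ∃ e, W e = B) :
    ∃ c : Code, ∀ n x,
      x ∈ W (Encodable.encode (Nat.Partrec.Code.curry c n)) ↔
        ∃ b ∈ B, x = Encodable.encode (Nat.Partrec.Code.curry c b) := by
  classical
  obtain ⟨e₀, he₀⟩ := hB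
  set cB := Denumerable.ofNat Nat.Partrec.Code e₀ with hcB
  set F : Code → ℕ →. ℕ := fun z x => Nat.rfindOpt fun k =>
      bif (Nat.Partrec.Code.evaln k.unpair.2 cB k.unpair.1).isSome &&
          (x.unpair.2 == Encodable.encode (Nat.Partrec.Code.curry z k.unpair.1))
      then some 0 else none with hF
  have hFpart : Partrec₂ F := by
    apply Partrec.rfindOpt
    have h1 : Primrec fun q : (Code × ℕ) × ℕ => (evaln q.2.unpair.2 cB q.2.unpair.1).isSome :=
      Primrec.option_isSome.comp <| primrec_evaln.comp <|
        (((Primrec.snd.comp (Primrec.unpair.comp Primrec.snd)).pair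
          (Primrec.const cB)).pair
          (Primrec.fst.comp (Primrec.unpair.comp Primrec.snd)))
    have ha : Primrec fun q : (Code × ℕ) × ℕ => q.1.2.unpair.2 :=
      Primrec.snd.comp (Primrec.unpair.comp (Primrec.snd.comp Primrec.fst))
    have hb : Primrec fun q : (Code × ℕ) × ℕ => curry q.1.1 q.2.unpair.1 :=
      Primrec₂.comp primrec₂_curry (Primrec.fst.comp Primrec.fst)
        (Primrec.fst.comp (Primrec.unpair.comp Primrec.snd))
    have hb' : Primrec fun q : (Code × ℕ) × ℕ => Encodable.encode (curry q.1.1 q.2.unpair.1) :=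
      Primrec.encode.comp hb
    have h2 : Primrec fun q : (Code × ℕ) × ℕ =>
        (q.1.2.unpair.2 == Encodable.encode (curry q.1.1 q.2.unpair.1)) :=
      Primrec₂.comp Primrec.beq ha hb'
    have hand : Primrec fun q : (Code × ℕ) × ℕ =>
        ((evaln q.2.unpair.2 cB q.2.unpair.1).isSome &&
          (q.1.2.unpair.2 == Encodable.encode (curry q.1.1 q.2.unpair.1))) :=
      (Primrec.cond h1 h2 (Primrec.const false)).of_eq fun q => by
        cases (evaln q.2.unpair.2 cB q.2.unpair.1).isSome <;> simp
    exact ((Primrec.cond hand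
      (Primrec.const (some 0)) (Primrec.const none)).to_comp).to₂
  obtain ⟨c, hc⟩ := fixed_point₂ hFpart
  refine ⟨c, fun n x => ?_⟩
  have hmem : x ∈ W (Encodable.encode (curry c n)) ↔ (F c (Nat.pair n x)).Dom := by
    show ((phi (Encodable.encode (curry c n))) x).Dom ↔ _
    rw [phi, Denumerable.ofNat_encode, eval_curry, hc]
  rw [hmem, hF]
  simp only [Nat.rfindOpt_dom]
  constructor
  · rintro ⟨k, a, ha⟩
    rcases hcond : ((evaln k.unpair.2 cB k.unpair.1).isSome &&
        ((Nat.pair n x).unpair.2 == Encodable.encode (curry c k.unpair.1))) with _|_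
    · rw [hcond] at ha; simp at ha
    · simp only [Bool.and_eq_true, Option.isSome_iff_exists, beq_iff_eq,
        Nat.unpair_pair] at hcond
      obtain ⟨⟨v, hv⟩, hx⟩ := hcond
      refine ⟨k.unpair.1, ?_, hx⟩
      have : v ∈ eval cB k.unpair.1 := evaln_complete.2 ⟨_, hv⟩
      have hdom : (eval cB k.unpair.1).Dom := Part.dom_iff_mem.2 ⟨_, this⟩
      rw [← he₀]
      exact hdom
  · rintro ⟨b, hb, hx⟩
    have hdom : (eval cB b).Dom := by
      have : b ∈ W e₀ := he₀ ▸ hb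
      exact this
    obtain ⟨v, hv⟩ := Part.dom_iff_mem.1 hdom
    obtain ⟨s, hs⟩ := evaln_complete.1 hv
    refine ⟨Nat.pair b s, 0, ?_⟩
    have : ((evaln (Nat.pair b s).unpair.2 cB (Nat.pair b s).unpair.1).isSome &&
        ((Nat.pair n x).unpair.2 == Encodable.encode (curry c (Nat.pair b s).unpair.1))) = true := by
      simp only [Nat.unpair_pair, Bool.and_eq_true, Option.isSome_iff_exists, beq_iff_eq]
      exact ⟨⟨v, hs⟩, hx⟩
    rw [this]; simp

open Nat.Partrec Code

lemma encode_const_strictMono : StrictMono fun n => Encodable.encode (Code.const n) := by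
  apply strictMono_nat_of_lt_succ
  intro n
  show Encodable.encode (Code.const n) < Encodable.encode (Code.const (n+1))
  rw [Nat.Partrec.Code.encodeCode_eq]
  show encodeCode (Code.const n) < encodeCode (Code.comp Code.succ (Code.const n))
  show _ < 2 * (2 * Nat.pair (encodeCode Code.succ) (encodeCode (Code.const n)) + 1) + 4
  have := Nat.right_le_pair (encodeCode Code.succ) (encodeCode (Code.const n))
  omega

lemma encode_const_le (n : ℕ) : n ≤ Encodable.encode (Code.const n) := by
  have h0 : Encodable.encode (Code.const 0) = 0 := by
    rw [Nat.Partrec.Code.encodeCode_eq]; rfl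
  have := encode_const_strictMono.le_apply (x := n)
  omega

lemma encode_curry_eq (c : Code) (n : ℕ) : Encodable.encode (curry c n) =
    2 * (2 * Nat.pair (encodeCode c)
      (2 * (2 * Nat.pair (encodeCode (Code.const n)) (encodeCode Code.id)) + 4) + 1) + 4 := by
  rw [Nat.Partrec.Code.encodeCode_eq]; rfl

lemma encode_curry_strictMono (c : Code) : StrictMono fun n => Encodable.encode (curry c n) := by
  apply strictMono_nat_of_lt_succ
  intro n
  rw [encode_curry_eq, encode_curry_eq]
  have h1 : encodeCode (Code.const n) < encodeCode (Code.const (n+1)) := by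
    have := encode_const_strictMono (Nat.lt_succ_self n)
    simpa [Nat.Partrec.Code.encodeCode_eq] using this
  have h2 := Nat.pair_lt_pair_left (encodeCode Code.id) h1
  have h3 := Nat.pair_lt_pair_right (encodeCode c)
    (b₁ := 2 * (2 * Nat.pair (encodeCode (Code.const n)) (encodeCode Code.id)) + 4)
    (b₂ := 2 * (2 * Nat.pair (encodeCode (Code.const (n+1))) (encodeCode Code.id)) + 4)
    (by omega)
  omega

lemma encode_curry_ge (c : Code) (n : ℕ) : 2 * n + 2 ≤ Encodable.encode (curry c n) := by
  rw [encode_curry_eq]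
  have h1 : n ≤ encodeCode (Code.const n) := by
    have := encode_const_le n; rwa [Nat.Partrec.Code.encodeCode_eq] at this
  have h2 := Nat.left_le_pair (encodeCode (Code.const n)) (encodeCode Code.id)
  have h3 := Nat.right_le_pair (encodeCode c)
    (2 * (2 * Nat.pair (encodeCode (Code.const n)) (encodeCode Code.id)) + 4)
  omega

lemma compl_range_infinite {h : ℕ → ℕ} (hm : StrictMono h) (hge : ∀ n, 2*n+2 ≤ h n) :
    (Set.range h)ᶜ.Infinite := by
  classical
  by_contra hni
  rw [Set.not_infinite] at hni
  have hfin := hni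
  set F := hfin.toFinset with hF
  set N := F.card with hN
  set T := (Finset.range (h (N+1))).filter (fun x => x ∉ Set.range h) with hT
  have hsub : T ⊆ F := by
    intro x hx
    rw [hT, Finset.mem_filter] at hx
    rw [hF, Set.Finite.mem_toFinset]
    exact hx.2
  have hcards := Finset.card_filter_add_card_filter_not
    (s := Finset.range (h (N+1))) (p := fun x => x ∈ Set.range h)
  have himg : (Finset.range (h (N+1))).filter (fun x => x ∈ Set.range h) ⊆
      (Finset.range (N+1)).image h := by
    intro x hx
    rw [Finset.mem_filter, Finset.mem_range] at hx
    obtain ⟨hlt, b, rfl⟩ := hx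
    rw [Finset.mem_image]
    exact ⟨b, Finset.mem_range.2 (hm.lt_iff_lt.1 hlt), rfl⟩
  have h1 : ((Finset.range (h (N+1))).filter (fun x => x ∈ Set.range h)).card ≤ N + 1 :=
    le_trans (Finset.card_le_card himg) (le_trans Finset.card_image_le (by simp))
  have h2 : T.card ≤ N := hN ▸ Finset.card_le_card hsub
  have h3 := hge (N+1)
  have h4 : (Finset.range (h (N+1))).card = h (N+1) := Finset.card_range _
  -- T.card uses predicate ¬ ∈ range h; match with filter_neg
  have hTeq : ((Finset.range (h (N+1))).filter (fun x => x ∈ Set.range h)).card + T.card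
      = h (N+1) := by
    rw [h4] at hcards
    rw [hT]
    exact hcards
  omega


open Nat.Partrec Code in
theorem stmt_9 (B : Set ℕ) (hB : CE B) (hne : B.Nonempty)
    (hdisj : ∃ E : Set ℕ, E.Infinite ∧ ComputablePred (· ∈ E) ∧ Disjoint B E) :
    ∃ π : ℕ ≃ ℕ, Computable (π : ℕ → ℕ) ∧ Computable (π.symm : ℕ → ℕ) ∧
      SelfConstructing ((π : ℕ → ℕ) ⁻¹' B) := by
  classical
  obtain ⟨E, hEinf, hEc, hBE⟩ := hdisj
  obtain ⟨instE, hEcomp⟩ := hEc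
  obtain ⟨c, hkey⟩ := exists_code_h B hB
  set h : ℕ → ℕ := fun b => Encodable.encode (Nat.Partrec.Code.curry c b) with hh
  have hmono : StrictMono h := encode_curry_strictMono c
  have hge : ∀ n, 2*n+2 ≤ h n := encode_curry_ge c
  have hcomp : Computable h := Primrec.to_comp <|
    Primrec.encode.comp (Primrec₂.comp Nat.Partrec.Code.primrec₂_curry (Primrec.const c) Primrec.id)
  have hhb_lt : ∀ b, b < h b := fun b => lt_of_lt_of_le (by omega) (hge b)
  have memS_iff : ∀ x, x ∈ Set.range h ↔ ∃ b, b ≤ x ∧ h b = x := by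
    intro x
    constructor
    · rintro ⟨b, rfl⟩; exact ⟨b, (hhb_lt b).le, rfl⟩
    · rintro ⟨b, _, rfl⟩; exact ⟨b, rfl⟩
  haveI instS : DecidablePred (· ∈ Set.range h) := fun x =>
    decidable_of_iff (∃ b ∈ Finset.range (x+1), h b = x) (by
      show _ ↔ x ∈ Set.range h
      rw [memS_iff x]
      constructor
      · rintro ⟨b, hb, he⟩; exact ⟨b, by have := Finset.mem_range.1 hb; omega, he⟩
      · rintro ⟨b, hb, he⟩; exact ⟨b, Finset.mem_range.2 (by omega), he⟩)
  have grec : ∀ x m, (Nat.rec false (fun b IH => IH || (h b == x)) m : Bool) = true ↔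
      ∃ b < m, h b = x := by
    intro x m
    induction m with
    | zero => simp
    | succ m ih =>
      show ((Nat.rec false (fun b IH => IH || (h b == x)) m : Bool) || (h m == x)) = true ↔ _
      rw [Bool.or_eq_true, ih, beq_iff_eq]
      constructor
      · rintro (⟨b, hb, he⟩ | he)
        · exact ⟨b, by omega, he⟩
        · exact ⟨m, by omega, he⟩
      · rintro ⟨b, hb, he⟩
        rcases Nat.lt_succ_iff_lt_or_eq.1 hb with h' | rfl
        · exact Or.inl ⟨b, h', he⟩
        · exact Or.inr he
  have hScomp : Computable fun x => decide (x ∈ Set.range h) := by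
    have hr : Computable fun x =>
        (Nat.rec false (fun b IH => IH || (h b == x)) (x+1) : Bool) :=
      Computable.nat_rec (Primrec.succ.to_comp) (Computable.const false)
        (Computable.cond (Computable.snd.comp Computable.snd)
          (Computable.const true)
          (Primrec.beq.to_comp.comp (hcomp.comp (Computable.fst.comp Computable.snd))
            Computable.fst)).to₂
    refine hr.of_eq fun x => ?_
    by_cases hx : x ∈ Set.range h
    · have : ∃ b < x + 1, h b = x := by
        obtain ⟨b, hb, he⟩ := (memS_iff x).1 hx
        exact ⟨b, by omega, he⟩
      rw [(grec x (x+1)).2 this]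
      simp [hx]
    · have : ¬ ∃ b < x + 1, h b = x := by
        rintro ⟨b, hb, he⟩
        exact hx ((memS_iff x).2 ⟨b, by omega, he⟩)
      have h5 := (grec x (x+1)).not.2 this
      have hfalse : (Nat.rec false (fun b IH => IH || (h b == x)) (x+1) : Bool) = false := by
        rcases hb : (Nat.rec false (fun b IH => IH || (h b == x)) (x+1) : Bool) with _ | _
        · rfl
        · exact absurd hb h5
      rw [hfalse]
      simp [hx]
  have hSinf : (setOf (· ∈ Set.range h)).Infinite := by
    change (Set.range h).Infinite
    exact Set.infinite_range_of_injective hmono.injective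
  have hScinf : (setOf (· ∉ Set.range h)).Infinite := by
    have := compl_range_infinite hmono hge
    convert this using 1
    rfl
  have hEinf' : (setOf (· ∈ E)).Infinite := by change E.Infinite; exact hEinf
  have hnthS : Nat.nth (· ∈ Set.range h) = h := by
    refine (StrictMono.range_inj (Nat.nth_strictMono hSinf) hmono).1 ?_
    rw [Nat.range_nth_of_infinite hSinf]; rfl
  have countS_h : ∀ b, Nat.count (· ∈ Set.range h) (h b) = b := by
    intro b
    have := Nat.count_nth_of_infinite hSinf b
    rwa [hnthS] at this
  -- abbreviations
  set eE : ℕ → ℕ := Nat.nth (· ∈ E) with heE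
  set cntE : ℕ → ℕ := Nat.count (· ∈ E) with hcntE
  set cS : ℕ → ℕ := Nat.nth (· ∉ Set.range h) with hcS
  set cntS : ℕ → ℕ := Nat.count (· ∈ Set.range h) with hcntS
  set cntSc : ℕ → ℕ := Nat.count (· ∉ Set.range h) with hcntSc
  have heEmem : ∀ k, eE k ∈ E := fun k => Nat.nth_mem_of_infinite hEinf' k
  have hcntE_eE : ∀ k, cntE (eE k) = k := fun k => Nat.count_nth_of_infinite hEinf' k
  have heE_cntE : ∀ {y}, y ∈ E → eE (cntE y) = y := fun hy => Nat.nth_count hy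
  have hcSmem : ∀ k, cS k ∉ Set.range h := fun k => Nat.nth_mem_of_infinite hScinf k
  have hcntSc_cS : ∀ k, cntSc (cS k) = k := fun k => Nat.count_nth_of_infinite hScinf k
  have hcS_cntSc : ∀ {x}, x ∉ Set.range h → cS (cntSc x) = x := fun hx => Nat.nth_count hx
  have hEB : ∀ {y}, y ∈ E → y ∉ B := fun hy hyB => (Set.disjoint_left.1 hBE) hyB hy
  -- the maps
  set α : ℕ → ℕ := fun n => bif decide (n ∈ E) then eE (2 * cntE n) else n with hα
  set π : ℕ → ℕ := fun x => bif decide (x ∈ Set.range h) then α (cntS x)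
    else eE (2 * cntSc x + 1) with hπ
  set ρ : ℕ → ℕ := fun y => bif decide (y ∈ E) then
      (bif (cntE y) % 2 == 1 then cS ((cntE y) / 2) else h (eE ((cntE y) / 2)))
    else h y with hρ
  -- basic evaluation lemmas
  have hπS : ∀ b, π (h b) = α b := by
    intro b
    have : decide ((h b) ∈ Set.range h) = true := by
      simp only [decide_eq_true_eq]; exact ⟨b, rfl⟩
    rw [hπ]; simp only [this, cond_true, countS_h]
  have hπSc : ∀ {x}, x ∉ Set.range h → π x = eE (2 * cntSc x + 1) := by
    intro x hx
    have : decide (x ∈ Set.range h) = false := by simp [hx]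
    rw [hπ]; simp only [this, cond_false]
  have left_inv : Function.LeftInverse ρ π := by
    intro x
    by_cases hx : x ∈ Set.range h
    · obtain ⟨b, rfl⟩ := hx
      rw [hπS b]
      by_cases hbE : b ∈ E
      · have hαb : α b = eE (2 * cntE b) := by rw [hα]; simp [hbE]
        rw [hαb, hρ]
        have h1 : decide (eE (2 * cntE b) ∈ E) = true := by simp [heEmem]
        simp only [h1, cond_true, hcntE_eE]
        have h2 : ((2 * cntE b) % 2 == 1) = false := by simp [Nat.mul_mod_right]
        simp only [h2, cond_false]
        rw [Nat.mul_div_cancel_left _ (by norm_num : 0 < 2), heE_cntE hbE]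
      · have hαb : α b = b := by rw [hα]; simp [hbE]
        rw [hαb, hρ]
        simp [hbE]
    · rw [hπSc hx, hρ]
      have h1 : decide (eE (2 * cntSc x + 1) ∈ E) = true := by simp [heEmem]
      simp only [h1, cond_true, hcntE_eE]
      have h2 : ((2 * cntSc x + 1) % 2 == 1) = true := by
        simp [Nat.add_mul_mod_self_left, Nat.mul_add_mod]
      simp only [h2, cond_true]
      have h3 : (2 * cntSc x + 1) / 2 = cntSc x := by omega
      rw [h3, hcS_cntSc hx]
  have right_inv : Function.RightInverse ρ π := by
    intro y
    by_cases hy : y ∈ E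
    · have h1 : decide (y ∈ E) = true := by simp [hy]
      rcases Nat.even_or_odd (cntE y) with he | ho
      · have h2 : ((cntE y) % 2 == 1) = false := by
          obtain ⟨m, hm⟩ := he; simp [hm, Nat.mul_mod_right]; omega
        have hρy : ρ y = h (eE ((cntE y) / 2)) := by rw [hρ]; simp only [h1, cond_true, h2, cond_false]
        rw [hρy, hπS]
        have h3 : α (eE (cntE y / 2)) = eE (2 * cntE (eE (cntE y / 2))) := by
          rw [hα]; simp [heEmem]
        rw [h3, hcntE_eE]
        have h4 : 2 * (cntE y / 2) = cntE y := by obtain ⟨m, hm⟩ := he; omega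
        rw [h4, heE_cntE hy]
      · have h2 : ((cntE y) % 2 == 1) = true := by
          obtain ⟨m, hm⟩ := ho; simp [hm, Nat.mul_add_mod]
        have hρy : ρ y = cS ((cntE y) / 2) := by rw [hρ]; simp only [h1, cond_true, h2, cond_true]
        rw [hρy, hπSc (hcSmem _), hcntSc_cS]
        have h4 : 2 * (cntE y / 2) + 1 = cntE y := by obtain ⟨m, hm⟩ := ho; omega
        rw [h4, heE_cntE hy]
    · have hρy : ρ y = h y := by rw [hρ]; simp [hy]
      rw [hρy, hπS]
      rw [hα]; simp [hy]
  set eqv : ℕ ≃ ℕ := ⟨π, ρ, left_inv, right_inv⟩ with heqv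
  -- computability
  have hEcnt : Computable cntE := count_computable hEcomp
  have hEnth : Computable eE := nth_computable hEcomp hEinf'
  have hScnt : Computable cntS := count_computable hScomp
  have hSccomp : Computable fun x => decide (x ∉ Set.range h) := by
    refine (Computable.cond hScomp (Computable.const false) (Computable.const true)).of_eq
      fun x => ?_
    by_cases hx : x ∈ Set.range h <;> simp [hx]
  have hSccnt : Computable cntSc := count_computable hSccomp
  have hScnth : Computable cS := nth_computable hSccomp hScinf
  have hαcomp : Computable α :=
    Computable.cond hEcomp
      (hEnth.comp (Primrec.nat_mul.to_comp.comp (Computable.const 2) hEcnt))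
      Computable.id
  have hπcomp : Computable π :=
    Computable.cond hScomp (hαcomp.comp hScnt)
      (hEnth.comp (Primrec.succ.to_comp.comp
        (Primrec.nat_mul.to_comp.comp (Computable.const 2) hSccnt)))
  have hρcomp : Computable ρ := by
    have hdiv : Computable fun y => (cntE y) / 2 :=
      Primrec.nat_div.to_comp.comp hEcnt (Computable.const 2)
    exact Computable.cond hEcomp
      (Computable.cond
        (Primrec.beq.to_comp.comp
          (Primrec.nat_mod.to_comp.comp hEcnt (Computable.const 2)) (Computable.const 1))
        (hScnth.comp hdiv) (hcomp.comp (hEnth.comp hdiv)))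
      hcomp
  -- the preimage
  have hαB : ∀ b, α b ∈ B ↔ b ∈ B := by
    intro b
    by_cases hbE : b ∈ E
    · have : α b = eE (2 * cntE b) := by rw [hα]; simp [hbE]
      rw [this]
      constructor
      · intro hmem; exact absurd hmem (hEB (heEmem _))
      · intro hmem; exact absurd hmem (hEB hbE)
    · have : α b = b := by rw [hα]; simp [hbE]
      rw [this]
  have hpre : π ⁻¹' B = h '' B := by
    ext x
    by_cases hx : x ∈ Set.range h
    · obtain ⟨b, rfl⟩ := hx
      simp only [Set.mem_preimage, hπS b, hαB b]
      constructor
      · intro hb; exact ⟨b, hb, rfl⟩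
      · rintro ⟨b', hb', he⟩
        rwa [← hmono.injective he]
    · simp only [Set.mem_preimage, hπSc hx]
      constructor
      · intro hmem; exact absurd hmem (hEB (heEmem _))
      · rintro ⟨b', _, rfl⟩
        exact absurd ⟨b', rfl⟩ hx
  have hW : ∀ n, W (h n) = h '' B := by
    intro n
    ext x
    rw [hh]
    show x ∈ W (Encodable.encode (Nat.Partrec.Code.curry c n)) ↔ _
    rw [hkey n x]
    constructor
    · rintro ⟨b, hb, rfl⟩; exact ⟨b, hb, rfl⟩
    · rintro ⟨b, hb, rfl⟩; exact ⟨b, hb, rfl⟩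
  refine ⟨eqv, hπcomp, hρcomp, ?_⟩
  have hcoe : (eqv : ℕ → ℕ) = π := rfl
  rw [hcoe, hpre]
  obtain ⟨b₀, hb₀⟩ := hne
  refine ⟨⟨h b₀, b₀, hb₀, rfl⟩, ⟨h 0, hW 0⟩, ?_⟩
  rintro e ⟨b, _, rfl⟩
  exact hW b
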